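/- arXiv:1709.08419 — 3 statements merged into one kernel-verified Lean document; each statement's English description precedes it below -/
import Mathlib

section
/- Let (X,d) be a b-metric space with constant s ≥ 1, G : (0,∞) → (0,∞) with the property that G(α_n) → 0 iff α_n → 0 for all positive sequences, φ : (0,∞) → (0,∞) non-decreasing with φ^n(t) → 0 for all t > 0, and T : X → X satisfying: d(Tx,Ty) ≠ 0 implies G(d(Tx,Ty)) ≤ φ(G(d(x,y))). Let ε₀ > 0 be such that sup_{α<ε₀} G(α) ≤ 1 and inf_{α≥ε} G(α) > 0 for all ε ∈ (0,ε₀). Then for every ε ∈ (0,ε₀) there exists n_ε ∈ ℕ such that for all n ≥ n_ε and all x,y ∈ X with d(x,y) < ε, one has d(T^n x, T^n y) < ε/(2s). -/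
open Filter Topology

/-- Uniform contraction of iterates on small distances. -/
theorem iterate_uniform_small
    {X : Type*} (d : X → X → ℝ) (s : ℝ) (hs : 1 ≤ s)
    (hnn : ∀ x y, 0 ≤ d x y)
    (hd0 : ∀ x y, d x y = 0 ↔ x = y)
    (hsymm : ∀ x y, d x y = d y x)
    (htri : ∀ x y z, d x y ≤ s * (d x z + d z y))
    (G : ℝ → ℝ) (hGpos : ∀ t, 0 < t → 0 < G t)
    (hG2 : ∀ α : ℕ → ℝ, (∀ n, 0 < α n) →
      (Tendsto (fun n => G (α n)) atTop (nhds 0) ↔ Tendsto α atTop (nhds 0)))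
    (φ : ℝ → ℝ) (hφpos : ∀ t, 0 < t → 0 < φ t)
    (hφmono : ∀ a b, 0 < a → a ≤ b → φ a ≤ φ b)
    (hφiter : ∀ t, 0 < t → Tendsto (fun n => φ^[n] t) atTop (nhds 0))
    (T : X → X)
    (hcontr : ∀ x y, d (T x) (T y) ≠ 0 → G (d (T x) (T y)) ≤ φ (G (d x y)))
    (ε₀ : ℝ) (hε₀ : 0 < ε₀)
    (hsup : ∀ α, 0 < α → α < ε₀ → G α ≤ 1)
    (hinf : ∀ ε, 0 < ε → ε < ε₀ → ∃ c : ℝ, 0 < c ∧ ∀ α, ε ≤ α → c ≤ G α) :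
    ∀ ε, 0 < ε → ε < ε₀ → ∃ nε : ℕ, ∀ n ≥ nε, ∀ x y : X,
      d x y < ε → d (T^[n] x) (T^[n] y) < ε / (2 * s) := by
  intro ε hε hεε₀
  -- iterated monotonicity & positivity of φ
  have hiter : ∀ n : ℕ, ∀ a b : ℝ, 0 < a → a ≤ b → φ^[n] a ≤ φ^[n] b ∧ 0 < φ^[n] a := by
    intro n
    induction n with
    | zero => intro a b ha hab; exact ⟨hab, ha⟩
    | succ n ih =>
      intro a b ha hab
      obtain ⟨h1, h2⟩ := ih a b ha hab
      rw [Function.iterate_succ_apply', Function.iterate_succ_apply']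
      exact ⟨hφmono _ _ h2 h1, hφpos _ h2⟩
  -- key chain estimate
  have key : ∀ (x y : X), 0 < d x y → ∀ n : ℕ,
      d (T^[n] x) (T^[n] y) = 0 ∨ G (d (T^[n] x) (T^[n] y)) ≤ φ^[n] (G (d x y)) := by
    intro x y hxy n
    induction n with
    | zero => right; simp
    | succ n ih =>
      rcases ih with h | h
      · left
        have : T^[n] x = T^[n] y := (hd0 _ _).1 h
        rw [Function.iterate_succ_apply', Function.iterate_succ_apply', this]
        exact (hd0 _ _).2 rfl
      · by_cases h0 : d (T^[n+1] x) (T^[n+1] y) = 0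
        · exact Or.inl h0
        · right
          have hne : T^[n] x ≠ T^[n] y := by
            intro he
            apply h0
            rw [Function.iterate_succ_apply', Function.iterate_succ_apply', he]
            exact (hd0 _ _).2 rfl
          have hdn : 0 < d (T^[n] x) (T^[n] y) :=
            lt_of_le_of_ne (hnn _ _) (fun he => hne ((hd0 _ _).1 he.symm))
          have h0' : d (T (T^[n] x)) (T (T^[n] y)) ≠ 0 := by
            rwa [Function.iterate_succ_apply', Function.iterate_succ_apply'] at h0
          have := hcontr (T^[n] x) (T^[n] y) h0'
          rw [Function.iterate_succ_apply', Function.iterate_succ_apply',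
            Function.iterate_succ_apply']
          exact this.trans (hφmono _ _ (hGpos _ hdn) h)
  have hs0 : (0:ℝ) < 2 * s := by linarith
  have hδpos : 0 < ε / (2 * s) := div_pos hε hs0
  have hδlt : ε / (2 * s) < ε₀ := by
    have h1 : ε / (2 * s) ≤ ε / 2 := by
      apply div_le_div_of_nonneg_left hε.le (by norm_num) (by linarith)
    linarith
  obtain ⟨c, hc, hcG⟩ := hinf (ε / (2 * s)) hδpos hδlt
  have hev : ∀ᶠ n in atTop, φ^[n] (1:ℝ) < c :=
    (hφiter 1 one_pos).eventually_lt_const hc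
  obtain ⟨N, hN⟩ := eventually_atTop.1 hev
  refine ⟨N, fun n hn x y hxy => ?_⟩
  by_cases hxy0 : d x y = 0
  · have : x = y := (hd0 _ _).1 hxy0
    subst this
    rw [(hd0 _ _).2 rfl]
    exact hδpos
  · have hxyp : 0 < d x y := lt_of_le_of_ne (hnn _ _) (Ne.symm hxy0)
    rcases key x y hxyp n with h | h
    · rw [h]; exact hδpos
    · by_contra hle
      push_neg at hle
      have h1 : c ≤ G (d (T^[n] x) (T^[n] y)) := hcG _ hle
      have h2 : G (d x y) ≤ 1 := hsup _ hxyp (hxy.trans hεε₀)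
      have h3 : φ^[n] (G (d x y)) ≤ φ^[n] 1 :=
        (hiter n _ _ (hGpos _ hxyp) h2).1
      have := hN n hn
      linarith
end

section
/- Let (X,d) be a b-metric space with constant s ≥ 1, G : (0,∞) → (0,∞) such that for every positive sequence (α_n), G(α_n) → 0 iff α_n → 0, φ : (0,∞) → (0,∞) non-decreasing with φ^k(t) → 0 for all t > 0, and T : X → X satisfying: d(Tx,Ty) ≠ 0 implies G(d(Tx,Ty)) ≤ φ(G(d(x,y))). Fix x₀ ∈ X and set x_k = T^k x₀. Then for every n ≥ 1, d(T^n x_{mn}, x_{mn}) → 0 as m → ∞. -/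
open Filter Topology

/-- Along the Picard iterates, d(Tⁿ x_{mn}, x_{mn}) → 0 as m → ∞. -/
theorem picard_subseq_tendsto
    {X : Type*} (d : X → X → ℝ) (s : ℝ) (hs : 1 ≤ s)
    (hnn : ∀ x y, 0 ≤ d x y)
    (hd0 : ∀ x y, d x y = 0 ↔ x = y)
    (hsymm : ∀ x y, d x y = d y x)
    (htri : ∀ x y z, d x y ≤ s * (d x z + d z y))
    (G : ℝ → ℝ) (hGpos : ∀ t, 0 < t → 0 < G t)
    (hG2 : ∀ α : ℕ → ℝ, (∀ n, 0 < α n) →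
      (Tendsto (fun n => G (α n)) atTop (nhds 0) ↔ Tendsto α atTop (nhds 0)))
    (φ : ℝ → ℝ) (hφpos : ∀ t, 0 < t → 0 < φ t)
    (hφmono : ∀ a b, 0 < a → a ≤ b → φ a ≤ φ b)
    (hφiter : ∀ t, 0 < t → Tendsto (fun k => φ^[k] t) atTop (nhds 0))
    (T : X → X)
    (hcontr : ∀ x y, d (T x) (T y) ≠ 0 → G (d (T x) (T y)) ≤ φ (G (d x y)))
    (x₀ : X) :
    ∀ n : ℕ, 1 ≤ n →
      Tendsto (fun m => d (T^[n] (T^[m * n] x₀)) (T^[m * n] x₀)) atTop (nhds 0) := by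
  intro n hn
  set a : ℕ → ℝ := fun k => d (T^[k + n] x₀) (T^[k] x₀) with ha
  have hsucc : ∀ k, a k = 0 → a (k + 1) = 0 := by
    intro k hk
    have hx : T^[k + n] x₀ = T^[k] x₀ := (hd0 _ _).mp hk
    have : T^[k + 1 + n] x₀ = T^[k + 1] x₀ := by
      have e1 : k + 1 + n = (k + n) + 1 := by ring
      rw [e1, Function.iterate_succ_apply', Function.iterate_succ_apply', hx]
    simpa [ha, this] using (hd0 (T^[k+1] x₀) (T^[k+1] x₀)).mpr rfl
  have hgoal : (fun m => d (T^[n] (T^[m * n] x₀)) (T^[m * n] x₀)) = fun m => a (m * n) := by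
    funext m
    simp [ha, Function.iterate_add_apply, Nat.add_comm]
  rw [hgoal]
  by_cases hz : ∃ k, a k = 0
  · obtain ⟨k, hk⟩ := hz
    have hall : ∀ j, k ≤ j → a j = 0 := by
      intro j hj
      induction j with
      | zero => simpa [Nat.le_zero.mp hj] using hk
      | succ j ih =>
        rcases Nat.lt_or_ge k (j + 1) with h | h
        · exact hsucc j (ih (Nat.lt_succ_iff.mp h))
        · have : k = j + 1 := le_antisymm hj h
          exact this ▸ hk
    have hev : ∀ᶠ m in atTop, a (m * n) = 0 := by
      filter_upwards [eventually_ge_atTop k] with m hm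
      exact hall (m * n) (le_trans hm (Nat.le_mul_of_pos_right m hn))
    exact Tendsto.congr' (by filter_upwards [hev] with m h; exact h.symm) tendsto_const_nhds
  · push_neg at hz
    have hpos : ∀ k, 0 < a k := fun k => lt_of_le_of_ne (hnn _ _) (Ne.symm (hz k))
    have hbound : ∀ k, G (a k) ≤ φ^[k] (G (a 0)) := by
      intro k
      induction k with
      | zero => simp
      | succ k ih =>
        have hne : d (T (T^[k + n] x₀)) (T (T^[k] x₀)) ≠ 0 := by
          have e1 : T (T^[k + n] x₀) = T^[(k+1) + n] x₀ := by
            rw [show (k+1)+n = (k+n)+1 by ring, Function.iterate_succ_apply']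
          have e2 : T (T^[k] x₀) = T^[k+1] x₀ := (Function.iterate_succ_apply' T k x₀).symm
          rw [e1, e2]; exact hz (k+1)
        have h1 : G (a (k + 1)) ≤ φ (G (a k)) := by
          have := hcontr (T^[k + n] x₀) (T^[k] x₀) hne
          have e1 : T (T^[k + n] x₀) = T^[(k+1) + n] x₀ := by
            rw [show (k+1)+n = (k+n)+1 by ring, Function.iterate_succ_apply']
          have e2 : T (T^[k] x₀) = T^[k+1] x₀ := (Function.iterate_succ_apply' T k x₀).symm
          rwa [e1, e2] at this
        calc G (a (k + 1)) ≤ φ (G (a k)) := h1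
          _ ≤ φ (φ^[k] (G (a 0))) := hφmono _ _ (hGpos _ (hpos k)) ih
          _ = φ^[k+1] (G (a 0)) := (Function.iterate_succ_apply' φ k _).symm
    have hG0 : 0 < G (a 0) := hGpos _ (hpos 0)
    have htend : Tendsto (fun m => G (a (m * n))) atTop (nhds 0) := by
      have h1 : Tendsto (fun m => φ^[m * n] (G (a 0))) atTop (nhds 0) := by
        have hcomp : Tendsto (fun m : ℕ => m * n) atTop atTop :=
          tendsto_atTop_atTop_of_monotone (fun i j hij => Nat.mul_le_mul_right n hij)
            (fun b => ⟨b, Nat.le_mul_of_pos_right b hn⟩)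
        exact (hφiter (G (a 0)) hG0).comp hcomp
      refine tendsto_of_tendsto_of_tendsto_of_le_of_le tendsto_const_nhds h1 ?_ ?_
      · exact fun m => (hGpos _ (hpos (m * n))).le
      · exact fun m => hbound (m * n)
    exact (hG2 (fun m => a (m * n)) (fun m => hpos (m * n))).mp htend
end

section
/- Let (X,d) be a b-metric space with constant s ≥ 1, G ∈ 𝔾₂ (i.e., G(α_n) → 0 iff α_n → 0 for all positive sequences), φ non-decreasing with φ^n(t) → 0 for all t > 0, T : X → X with the contractive property d(Tx,Ty) ≠ 0 ⟹ G(d(Tx,Ty)) ≤ φ(G(d(x,y))), and let ε₀ be as given by the 𝔾₂ lemma. Fix x₀ ∈ X and let x_k = T^k x₀. Then for every ε ∈ (0,ε₀) there exist n, m ∈ ℕ* such that T^n maps the open ball B(x_{mn}, ε) into itself. -/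
open Filter Topology

/-- Invariant ball lemma. -/
theorem invariant_ball
    {X : Type*} (d : X → X → ℝ) (s : ℝ) (hs : 1 ≤ s)
    (hnn : ∀ x y, 0 ≤ d x y)
    (hd0 : ∀ x y, d x y = 0 ↔ x = y)
    (hsymm : ∀ x y, d x y = d y x)
    (htri : ∀ x y z, d x y ≤ s * (d x z + d z y))
    (G : ℝ → ℝ) (hGpos : ∀ t, 0 < t → 0 < G t)
    (hG2 : ∀ α : ℕ → ℝ, (∀ n, 0 < α n) →
      (Tendsto (fun n => G (α n)) atTop (nhds 0) ↔ Tendsto α atTop (nhds 0)))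
    (φ : ℝ → ℝ) (hφpos : ∀ t, 0 < t → 0 < φ t)
    (hφmono : ∀ a b, 0 < a → a ≤ b → φ a ≤ φ b)
    (hφiter : ∀ t, 0 < t → Tendsto (fun n => φ^[n] t) atTop (nhds 0))
    (T : X → X)
    (hcontr : ∀ x y, d (T x) (T y) ≠ 0 → G (d (T x) (T y)) ≤ φ (G (d x y)))
    (ε₀ : ℝ) (hε₀ : 0 < ε₀)
    (hsup : ∀ ε, 0 < ε → ε < ε₀ → ∀ α, 0 < α → α < ε → G α ≤ 1)
    (hinf : ∀ ε, 0 < ε → ε < ε₀ → ∃ c : ℝ, 0 < c ∧ ∀ α, ε ≤ α → c ≤ G α)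
    (x₀ : X) :
    ∀ ε, 0 < ε → ε < ε₀ → ∃ n : ℕ, 1 ≤ n ∧ ∃ m : ℕ, 1 ≤ m ∧
      ∀ u : X, d u (T^[m * n] x₀) < ε → d (T^[n] u) (T^[m * n] x₀) < ε := by

  intro ε hε hεε₀
  have hs0 : (0:ℝ) < s := lt_of_lt_of_le one_pos hs
  set δ : ℝ := ε / (2 * s) with hδdef
  have hδ : 0 < δ := div_pos hε (by linarith)
  have hδε : δ < ε := by
    rw [hδdef, div_lt_iff₀ (by linarith : (0:ℝ) < 2 * s)]
    nlinarith
  have hδε₀ : δ < ε₀ := hδε.trans hεε₀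
  -- positivity of φ iterates
  have hφiterpos : ∀ n t, 0 < t → 0 < φ^[n] t := by
    intro n
    induction n with
    | zero => intro t ht; simpa using ht
    | succ k ih =>
      intro t ht
      rw [Function.iterate_succ_apply']
      exact hφpos _ (ih t ht)
  have hφitermono : ∀ n a b, 0 < a → a ≤ b → φ^[n] a ≤ φ^[n] b := by
    intro n
    induction n with
    | zero => intro a b _ h; simpa using h
    | succ k ih =>
      intro a b ha h
      rw [Function.iterate_succ_apply', Function.iterate_succ_apply']
      exact hφmono _ _ (hφiterpos k a ha) (ih a b ha h)
  -- key dichotomy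
  have key : ∀ (n : ℕ) (u v : X), d u v ≠ 0 →
      d (T^[n] u) (T^[n] v) = 0 ∨
      (0 < d (T^[n] u) (T^[n] v) ∧
        G (d (T^[n] u) (T^[n] v)) ≤ φ^[n] (G (d u v))) := by
    intro n u v huv
    induction n with
    | zero =>
      right
      refine ⟨lt_of_le_of_ne (hnn u v) (Ne.symm (by simpa using huv)), ?_⟩
      simp
    | succ k ih =>
      rcases ih with h0 | ⟨hpos, hle⟩
      · left
        have hk : T^[k] u = T^[k] v := (hd0 _ _).mp h0
        rw [Function.iterate_succ_apply', Function.iterate_succ_apply', hk]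
        exact (hd0 _ _).mpr rfl
      · by_cases hz : d (T^[k+1] u) (T^[k+1] v) = 0
        · left; exact hz
        · right
          refine ⟨lt_of_le_of_ne (hnn _ _) (Ne.symm hz), ?_⟩
          rw [Function.iterate_succ_apply', Function.iterate_succ_apply'] at hz ⊢
          calc G (d (T (T^[k] u)) (T (T^[k] v))) ≤ φ (G (d (T^[k] u) (T^[k] v))) :=
                hcontr _ _ hz
            _ ≤ φ (φ^[k] (G (d u v))) := hφmono _ _ (hGpos _ hpos) hle
            _ = φ^[k+1] (G (d u v)) := (Function.iterate_succ_apply' φ k _).symm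
  -- choose c and n
  obtain ⟨c, hc, hcinf⟩ := hinf δ hδ hδε₀
  obtain ⟨N₀, hN₀⟩ := eventually_atTop.mp ((hφiter 1 one_pos).eventually (gt_mem_nhds hc))
  set n : ℕ := max N₀ 1 with hndef
  have hn1 : 1 ≤ n := le_max_right _ _
  have hφn : φ^[n] 1 < c := hN₀ n (le_max_left _ _)
  -- find m
  have hball : ∃ m : ℕ, 1 ≤ m ∧ d (T^[m*n] x₀) (T^[m*n + n] x₀) < δ := by
    by_cases hfix : ∃ k, T (T^[k] x₀) = T^[k] x₀
    · obtain ⟨k, hk⟩ := hfix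
      have fixall : ∀ j, k ≤ j → T^[j] x₀ = T^[k] x₀ := by
        intro j hj
        have : T^[(j - k) + k] x₀ = T^[j - k] (T^[k] x₀) := Function.iterate_add_apply T _ _ _
        rw [Nat.sub_add_cancel hj] at this
        rw [this, Function.iterate_fixed hk]
      refine ⟨k + 1, Nat.succ_le_succ (Nat.zero_le _), ?_⟩
      have hmk : k ≤ (k+1)*n := le_trans (Nat.le_succ k)
        (Nat.le_mul_of_pos_right _ (lt_of_lt_of_le one_pos hn1))
      rw [fixall _ hmk, fixall _ (le_trans hmk (Nat.le_add_right _ _))]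
      rw [(hd0 _ _).mpr rfl]
      exact hδ
    · push_neg at hfix
      have hdk : ∀ k, 0 < d (T^[k] x₀) (T^[k+1] x₀) := by
        intro k
        refine lt_of_le_of_ne (hnn _ _) (Ne.symm ?_)
        intro h
        exact hfix k (by
          have := (hd0 _ _).mp h
          rw [Function.iterate_succ_apply'] at this
          exact this.symm)
      have hd00 : d x₀ (T x₀) ≠ 0 := by
        have := hdk 0
        simp only [Function.iterate_zero, Function.iterate_one, id] at this
        exact ne_of_gt this
      have hGk : ∀ k, G (d (T^[k] x₀) (T^[k+1] x₀)) ≤ φ^[k] (G (d x₀ (T x₀))) := by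
        intro k
        have h2 : T^[k] (T x₀) = T^[k+1] x₀ := (Function.iterate_succ_apply T k x₀).symm
        rcases key k x₀ (T x₀) hd00 with h0 | ⟨_, hle⟩
        · rw [h2] at h0
          exact absurd h0 (ne_of_gt (hdk k))
        · rwa [h2] at hle
      have htend : Tendsto (fun k => d (T^[k] x₀) (T^[k+1] x₀)) atTop (nhds 0) := by
        rw [← hG2 _ hdk]
        exact squeeze_zero (fun k => (hGpos _ (hdk k)).le) hGk
          (hφiter _ (hGpos _ (lt_of_le_of_ne (hnn _ _) (Ne.symm hd00))))
      have chain : ∀ (N : ℕ) (δ' : ℝ), 0 < δ' →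
          ∃ M : ℕ, ∀ p, M ≤ p → d (T^[p] x₀) (T^[p + N] x₀) < δ' := by
        intro N
        induction N with
        | zero =>
          intro δ' hδ'
          exact ⟨0, fun p _ => by simpa [(hd0 _ _).mpr rfl] using hδ'⟩
        | succ k ih =>
          intro δ' hδ'
          have hδ2 : 0 < δ' / (2 * s) := div_pos hδ' (by linarith)
          obtain ⟨M₁, hM₁⟩ := ih (δ' / (2 * s)) hδ2
          obtain ⟨M₂, hM₂⟩ := (Metric.tendsto_atTop.mp htend) (δ' / (2 * s)) hδ2
          refine ⟨max M₁ M₂, fun p hp => ?_⟩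
          have hp1 : M₁ ≤ p + 1 := le_trans (le_trans (le_max_left _ _) hp) (Nat.le_succ p)
          have hp2 : M₂ ≤ p := le_trans (le_max_right _ _) hp
          have h1 : d (T^[p] x₀) (T^[p+1] x₀) < δ' / (2 * s) := by
            have := hM₂ p hp2
            rw [Real.dist_eq, sub_zero, abs_of_nonneg (hnn _ _)] at this
            exact this
          have h2 : d (T^[p+1] x₀) (T^[p+1+k] x₀) < δ' / (2 * s) := hM₁ (p+1) hp1
          have h3 : d (T^[p] x₀) (T^[p + (k+1)] x₀) ≤
              s * (d (T^[p] x₀) (T^[p+1] x₀) + d (T^[p+1] x₀) (T^[p + (k+1)] x₀)) :=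
            htri _ _ _
          have he : p + 1 + k = p + (k + 1) := by ring
          rw [he] at h2
          calc d (T^[p] x₀) (T^[p + (k+1)] x₀)
              ≤ s * (d (T^[p] x₀) (T^[p+1] x₀) + d (T^[p+1] x₀) (T^[p + (k+1)] x₀)) := h3
            _ < s * (δ' / (2 * s) + δ' / (2 * s)) := by
                apply mul_lt_mul_of_pos_left _ hs0
                exact add_lt_add h1 h2
            _ = δ' := by field_simp; ring
      obtain ⟨M, hM⟩ := chain n δ hδ
      refine ⟨M + 1, Nat.succ_le_succ (Nat.zero_le _), hM _ ?_⟩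
      have := Nat.mul_le_mul_left (M+1) hn1
      omega
  obtain ⟨m, hm1, hmδ⟩ := hball
  refine ⟨n, hn1, m, hm1, ?_⟩
  intro u hu
  have hiter : T^[n] (T^[m*n] x₀) = T^[m*n + n] x₀ := by
    rw [add_comm, Function.iterate_add_apply]
  by_cases hu0 : d u (T^[m*n] x₀) = 0
  · have hueq : u = T^[m*n] x₀ := (hd0 _ _).mp hu0
    rw [hueq, hiter, hsymm]
    exact hmδ.trans hδε
  · have hupos : 0 < d u (T^[m*n] x₀) := lt_of_le_of_ne (hnn _ _) (Ne.symm hu0)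
    have hG1 : G (d u (T^[m*n] x₀)) ≤ 1 := hsup ε hε hεε₀ _ hupos hu
    have hsmall : d (T^[n] u) (T^[n] (T^[m*n] x₀)) < δ := by
      rcases key n u (T^[m*n] x₀) hu0 with h0 | ⟨hpos, hle⟩
      · rw [h0]; exact hδ
      · by_contra h
        push_neg at h
        have hcle : c ≤ G (d (T^[n] u) (T^[n] (T^[m*n] x₀))) := hcinf _ h
        have : G (d (T^[n] u) (T^[n] (T^[m*n] x₀))) ≤ φ^[n] 1 :=
          hle.trans (hφitermono n _ _ (hGpos _ hupos) hG1)
        linarith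
    have hsecond : d (T^[n] (T^[m*n] x₀)) (T^[m*n] x₀) < δ := by
      rw [hiter, hsymm]
      exact hmδ
    calc d (T^[n] u) (T^[m*n] x₀)
        ≤ s * (d (T^[n] u) (T^[n] (T^[m*n] x₀)) + d (T^[n] (T^[m*n] x₀)) (T^[m*n] x₀)) :=
          htri _ _ _
      _ < s * (δ + δ) := mul_lt_mul_of_pos_left (add_lt_add hsmall hsecond) hs0
      _ = ε := by rw [hδdef]; field_simp; ring
end
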